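/- The completely bounded norm of a t-tensor can be computed using a single contraction-valued map: ‖T‖_cb, defined as the supremum over t different contraction-valued maps A_1,…,A_t of ‖∑_{i∈[n]^t} T_i A_1(i_1)⋯A_t(i_t)‖, equals the supremum over a single contraction-valued map A of ‖∑_{i∈[n]^t} T_i A(i_1)⋯A(i_t)‖. -/

import Mathlib

noncomputable section

/-- `d × d` real matrices, viewed as operators on Euclidean space (with operator norm). -/
abbrev Mat (d : ℕ) := EuclideanSpace ℝ (Fin d) →L[ℝ] EuclideanSpace ℝ (Fin d)

namespace CbAux

variable {d t : ℕ}

abbrev K (d t : ℕ) := PiLp 2 (fun _ : Fin (t + 1) => EuclideanSpace ℝ (Fin d))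

set_option maxHeartbeats 4000000 in
set_option synthInstance.maxHeartbeats 400000 in
def op (t : ℕ) {d : ℕ} (k : ℕ) (C : ℕ → Mat d) : K d t →L[ℝ] K d t :=
  LinearMap.toContinuousLinearMap <| show K d t →ₗ[ℝ] K d t from
  { toFun := fun x => WithLp.toLp 2 (fun s => if h : (s : ℕ) + k ≤ t then C s (x ⟨(s : ℕ) + k, by omega⟩) else 0)
    map_add' := by
      intro x y; ext s
      by_cases h : (s : ℕ) + k ≤ t <;> simp [h, PiLp.add_apply]
    map_smul' := by
      intro c x; ext s
      by_cases h : (s : ℕ) + k ≤ t <;> simp [h, PiLp.smul_apply] }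

lemma op_apply (k : ℕ) (C : ℕ → Mat d) (x : K d t) (s : Fin (t + 1)) :
    op t k C x s = if h : (s : ℕ) + k ≤ t then C s (x ⟨(s : ℕ) + k, by omega⟩) else 0 := rfl

lemma norm_eq_of_sq_eq {a b : ℝ} (h : a ^ 2 = b ^ 2) (ha : 0 ≤ a) (hb : 0 ≤ b) : a = b := by
  nlinarith

lemma le_of_sq_le {a b : ℝ} (h : a ^ 2 ≤ b ^ 2) (ha : 0 ≤ a) (hb : 0 ≤ b) : a ≤ b := by
  nlinarith

lemma apply_le_norm (x : K d t) (s : Fin (t + 1)) : ‖x s‖ ≤ ‖x‖ := by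
  refine le_of_sq_le ?_ (norm_nonneg _) (norm_nonneg _)
  conv_rhs => rw [PiLp.norm_sq_eq_of_L2]
  exact Finset.single_le_sum (f := fun i => ‖x i‖ ^ 2) (fun i _ => by positivity)
    (Finset.mem_univ s)

lemma op_norm_le_one (k : ℕ) (C : ℕ → Mat d) (hC : ∀ m, ‖C m‖ ≤ 1) :
    ‖op t k C‖ ≤ 1 := by
  refine ContinuousLinearMap.opNorm_le_bound _ zero_le_one fun x => ?_
  rw [one_mul]
  refine le_of_sq_le ?_ (norm_nonneg _) (norm_nonneg _)
  rw [PiLp.norm_sq_eq_of_L2]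
  conv_rhs => rw [PiLp.norm_sq_eq_of_L2]
  set σ : Fin (t + 1) → Fin (t + 1) := fun s =>
    ⟨((s : ℕ) + k) % (t + 1), Nat.mod_lt _ t.succ_pos⟩ with hσ
  have key : ∀ s : Fin (t + 1), ‖op t k C x s‖ ^ 2 ≤
      if (s : ℕ) + k ≤ t then ‖x (σ s)‖ ^ 2 else 0 := by
    intro s
    rw [op_apply]
    split_ifs with h
    · have hσs : σ s = ⟨(s : ℕ) + k, by omega⟩ := Fin.ext (Nat.mod_eq_of_lt (by omega))
      rw [hσs]
      have h1 : ‖C s (x ⟨(s : ℕ) + k, by omega⟩)‖ ≤ ‖x ⟨(s : ℕ) + k, by omega⟩‖ := by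
        refine le_trans ((C s).le_opNorm _) ?_
        calc ‖C (s:ℕ)‖ * ‖x ⟨(s : ℕ) + k, by omega⟩‖ ≤ 1 * ‖x ⟨(s : ℕ) + k, by omega⟩‖ :=
              mul_le_mul_of_nonneg_right (hC _) (norm_nonneg _)
        _ = _ := one_mul _
      exact pow_le_pow_left₀ (norm_nonneg _) h1 2
    · simp
  refine le_trans (Finset.sum_le_sum fun s _ => key s) ?_
  rw [← Finset.sum_filter]
  have hinj : ∀ s₁ ∈ Finset.univ.filter (fun s : Fin (t+1) => (s : ℕ) + k ≤ t),
      ∀ s₂ ∈ Finset.univ.filter (fun s : Fin (t+1) => (s : ℕ) + k ≤ t),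
      σ s₁ = σ s₂ → s₁ = s₂ := by
    intro s₁ h₁ s₂ h₂ h
    simp only [Finset.mem_filter, Finset.mem_univ, true_and] at h₁ h₂
    have := congrArg Fin.val h
    simp only [hσ] at this
    rw [Nat.mod_eq_of_lt (by omega), Nat.mod_eq_of_lt (by omega)] at this
    exact Fin.ext (by omega)
  refine le_trans (le_of_eq (Finset.sum_image (f := fun s' : Fin (t+1) => ‖x s'‖ ^ 2)
    (g := σ) hinj).symm) ?_
  exact Finset.sum_le_sum_of_subset_of_nonneg (Finset.subset_univ _)
    (fun i _ _ => by positivity)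

lemma op_t_norm (C : ℕ → Mat d) : ‖op t t C‖ = ‖C 0‖ := by
  have htlt : t < t + 1 := Nat.lt_succ_self t
  refine le_antisymm ?_ ?_
  · refine ContinuousLinearMap.opNorm_le_bound _ (norm_nonneg _) fun x => ?_
    refine le_of_sq_le ?_ (norm_nonneg _) (by positivity)
    rw [PiLp.norm_sq_eq_of_L2]
    have hzero : ∀ s : Fin (t + 1), s ≠ 0 → ‖op t t C x s‖ ^ 2 = 0 := by
      intro s hs
      rw [op_apply, dif_neg (by
        have : (s : ℕ) ≠ 0 := fun h => hs (Fin.ext h)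
        omega)]
      simp
    have h0 : ((0 : Fin (t + 1)) : ℕ) + t ≤ t := by simp
    rw [Fintype.sum_eq_single 0 hzero, op_apply, dif_pos h0]
    refine pow_le_pow_left₀ (norm_nonneg _) ?_ 2
    refine le_trans (ContinuousLinearMap.le_opNorm _ _) ?_
    exact mul_le_mul_of_nonneg_left (apply_le_norm x _) (norm_nonneg _)
  · refine ContinuousLinearMap.opNorm_le_bound _ (norm_nonneg _) fun v => ?_
    set x : K d t := (WithLp.equiv 2 _).symm (Pi.single (⟨t, htlt⟩ : Fin (t + 1)) v) with hx
    have hxs : ∀ s, x s = (Pi.single (⟨t, htlt⟩ : Fin (t + 1)) v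
        : ∀ _ : Fin (t + 1), EuclideanSpace ℝ (Fin d)) s := fun s => by
      rw [hx]; rfl
    have hxnorm : ‖x‖ = ‖v‖ := by
      refine norm_eq_of_sq_eq ?_ (norm_nonneg _) (norm_nonneg _)
      rw [PiLp.norm_sq_eq_of_L2]
      rw [Fintype.sum_eq_single (⟨t, htlt⟩ : Fin (t + 1)) (fun s hs => by
        rw [hxs, Pi.single_eq_of_ne hs]
        simp)]
      rw [hxs, Pi.single_eq_same]
    have h0 : ((0 : Fin (t + 1)) : ℕ) + t ≤ t := by simp
    have hcomp : op t t C x 0 = C 0 v := by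
      rw [op_apply, dif_pos h0]
      have hidx : (⟨((0 : Fin (t + 1)) : ℕ) + t, by omega⟩ : Fin (t + 1)) = ⟨t, htlt⟩ :=
        Fin.ext (by simp)
      rw [hidx, hxs, Pi.single_eq_same]
      rfl
    calc ‖C 0 v‖ = ‖op t t C x 0‖ := by rw [hcomp]
      _ ≤ ‖op t t C x‖ := apply_le_norm _ _
      _ ≤ ‖op t t C‖ * ‖x‖ := (op t t C).le_opNorm x
      _ = ‖op t t C‖ * ‖v‖ := by rw [hxnorm]


lemma op_mul_op_one (k : ℕ) (C D : ℕ → Mat d) :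
    op t k C * op t 1 D = op t (k + 1) (fun m => C m * D (m + k)) := by
  refine ContinuousLinearMap.ext fun x => ?_
  ext s : 1
  show op t k C (op t 1 D x) s = _
  rw [op_apply, op_apply]
  by_cases h1 : (s : ℕ) + (k + 1) ≤ t
  · rw [dif_pos (by omega : (s : ℕ) + k ≤ t), dif_pos h1, op_apply,
      dif_pos (by simp only []; omega : ((⟨(s : ℕ) + k, by omega⟩ : Fin (t + 1)) : ℕ) + 1 ≤ t)]
    rfl
  · rw [dif_neg h1]
    by_cases h2 : (s : ℕ) + k ≤ t
    · rw [dif_pos h2, op_apply,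
        dif_neg (by simp only []; omega : ¬ ((⟨(s : ℕ) + k, by omega⟩ : Fin (t + 1)) : ℕ) + 1 ≤ t)]
      simp
    · rw [dif_neg h2]

lemma op_zero_one : op t 0 (fun _ => 1) = (1 : K d t →L[ℝ] K d t) := by
  refine ContinuousLinearMap.ext fun x => ?_
  ext s : 1
  show op t 0 (fun _ => 1) x s = x s
  rw [op_apply, dif_pos (by omega : (s : ℕ) + 0 ≤ t)]
  have : (⟨(s : ℕ) + 0, by omega⟩ : Fin (t + 1)) = s := Fin.ext (by simp)
  rw [this]
  rfl

/-- The "chain" product of a list of position-dependent matrices, starting at position `m`. -/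
def prodChain {d : ℕ} : List (ℕ → Mat d) → ℕ → Mat d
  | [], _ => 1
  | D :: L, m => D m * prodChain L (m + 1)

lemma op_mul_prod (L : List (ℕ → Mat d)) : ∀ (k : ℕ) (C : ℕ → Mat d),
    op t k C * (L.map (op t 1)).prod = op t (k + L.length)
      (fun m => C m * prodChain L (m + k)) := by
  induction L with
  | nil =>
    intro k C
    simp only [List.map_nil, List.prod_nil, List.length_nil, Nat.add_zero, mul_one]
    have hfun : (fun m => C m * prodChain ([] : List (ℕ → Mat d)) (m + k)) = fun m => C m := by
      funext m; simp [prodChain]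
    rw [hfun]
  | cons D L ih =>
    intro k C
    simp only [List.map_cons, List.prod_cons, List.length_cons]
    rw [← mul_assoc, op_mul_op_one, ih]
    have hlen : k + 1 + L.length = k + (L.length + 1) := by omega
    rw [hlen]
    have hfun : (fun m => C m * D (m + k) * prodChain L (m + (k + 1)))
        = fun m => C m * prodChain (D :: L) (m + k) := by
      funext m
      show C m * D (m + k) * prodChain L (m + (k + 1)) = C m * (D (m + k) * prodChain L (m + k + 1))
      rw [mul_assoc]
      have : m + (k + 1) = m + k + 1 := by omega
      rw [this]
    rw [hfun]

lemma prodChain_ofFn {m : ℕ} : ∀ (g : Fin m → ℕ → Mat d) (j : ℕ),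
    prodChain (List.ofFn g) j = (List.ofFn fun s : Fin m => g s (j + (s : ℕ))).prod := by
  induction m with
  | zero => intro g j; simp [prodChain]
  | succ m ih =>
    intro g j
    rw [List.ofFn_succ]
    show g 0 j * prodChain (List.ofFn fun s : Fin m => g s.succ) (j + 1) = _
    rw [ih]
    conv_rhs => rw [List.ofFn_succ, List.prod_cons]
    have hfun : (fun s : Fin m => g s.succ (j + ((s.succ : Fin (m + 1)) : ℕ)))
        = fun s : Fin m => g s.succ (j + 1 + (s : ℕ)) := by
      funext s
      have : j + ((s.succ : Fin (m + 1)) : ℕ) = j + 1 + (s : ℕ) := by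
        simp [Fin.val_succ]; omega
      rw [this]
    have h0 : j + (((0 : Fin (m + 1))) : ℕ) = j := by simp
    rw [congrArg List.ofFn hfun, h0]

lemma op_t_congr (C D : ℕ → Mat d) (h : C 0 = D 0) : op t t C = op t t D := by
  refine ContinuousLinearMap.ext fun x => ?_
  ext s
  rw [op_apply, op_apply]
  by_cases hs : (s : ℕ) + t ≤ t
  · have h0 : (s : ℕ) = 0 := by omega
    have hC : C (s : ℕ) = D (s : ℕ) := by rw [h0]; exact h
    rw [dif_pos hs, dif_pos hs, hC]
  · rw [dif_neg hs, dif_neg hs]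

/-- The corner block embedding `M ↦ e₀ e_t^T ⊗ M`, as a linear map. -/
def Blk (d t : ℕ) : Mat d →ₗ[ℝ] (K d t →L[ℝ] K d t) where
  toFun M := op t t (fun _ => M)
  map_add' M N := by
    refine ContinuousLinearMap.ext fun x => ?_
    ext s : 1
    show op t t _ x s = op t t (fun _ => M) x s + op t t (fun _ => N) x s
    rw [op_apply, op_apply, op_apply]
    split_ifs with h <;> simp [PiLp.add_apply]
  map_smul' c M := by
    refine ContinuousLinearMap.ext fun x => ?_
    ext s : 1
    show op t t _ x s = c • op t t (fun _ => M) x s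
    rw [op_apply, op_apply]
    split_ifs with h <;> simp [PiLp.smul_apply]

lemma norm_Blk (M : Mat d) : ‖Blk d t M‖ = ‖M‖ := op_t_norm _


/-- Isometry from `K d t` onto a standard Euclidean space. -/
def iso (d t : ℕ) : K d t ≃ₗᵢ[ℝ] EuclideanSpace ℝ (Fin (Module.finrank ℝ (K d t))) :=
  (stdOrthonormalBasis ℝ (K d t)).repr

/-- Conjugation by `iso`, as a linear map on operators. -/
def cj (d t : ℕ) : (K d t →L[ℝ] K d t) →ₗ[ℝ] Mat (Module.finrank ℝ (K d t)) where
  toFun B := ((iso d t).toLinearIsometry.toContinuousLinearMap).comp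
    (B.comp ((iso d t).symm.toLinearIsometry.toContinuousLinearMap))
  map_add' B₁ B₂ := by
    ext x
    simp [ContinuousLinearMap.comp_apply]
  map_smul' c B := by
    ext x
    simp [ContinuousLinearMap.comp_apply]

lemma norm_cj (B : K d t →L[ℝ] K d t) : ‖cj d t B‖ = ‖B‖ := by
  show ‖((iso d t).toLinearIsometry.toContinuousLinearMap).comp
    (B.comp ((iso d t).symm.toLinearIsometry.toContinuousLinearMap))‖ = ‖B‖
  rw [LinearIsometry.norm_toContinuousLinearMap_comp]
  have h := ContinuousLinearMap.opNorm_comp_linearIsometryEquiv B (iso d t).symm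
  exact h

lemma cj_mul (B₁ B₂ : K d t →L[ℝ] K d t) : cj d t (B₁ * B₂) = cj d t B₁ * cj d t B₂ := by
  ext x
  show (iso d t) ((B₁ * B₂) ((iso d t).symm x)) _ = _
  simp [ContinuousLinearMap.mul_apply, cj, ContinuousLinearMap.comp_apply]

lemma cj_one : cj d t 1 = 1 := by
  ext x
  show (iso d t) ((1 : K d t →L[ℝ] K d t) ((iso d t).symm x)) _ = _
  simp [cj]

lemma cj_prod (L : List (K d t →L[ℝ] K d t)) : cj d t L.prod = (L.map (cj d t)).prod := by
  induction L with
  | nil => simp only [List.prod_nil, List.map_nil]; exact cj_one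
  | cons B L ih => rw [List.prod_cons, List.map_cons, List.prod_cons, cj_mul, ih]


/-- Extension of the family of contraction maps to all of `ℕ`, by zero. -/
def extA (t : ℕ) {d n : ℕ} (A : Fin t → Fin n → Mat d) (m : ℕ) (j : Fin n) : Mat d :=
  if h : m < t then A ⟨m, h⟩ j else 0

lemma prod_ops_eq_blk {n : ℕ} (A : Fin t → Fin n → Mat d) (i : Fin t → Fin n) :
    (List.ofFn fun s : Fin t => op t 1 (fun m => extA t A m (i s))).prod
      = Blk d t ((List.ofFn fun s => A s (i s)).prod) := by
  set L : List (ℕ → Mat d) := List.ofFn (fun s : Fin t => fun m => extA t A m (i s)) with hL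
  have h1 : (List.ofFn fun s : Fin t => op t 1 (fun m => extA t A m (i s)))
      = L.map (op t 1) := by
    rw [hL, List.map_ofFn]
    rfl
  rw [h1, ← one_mul (L.map (op t 1)).prod, ← op_zero_one, op_mul_prod]
  have hlen : L.length = t := by rw [hL, List.length_ofFn]
  rw [hlen, Nat.zero_add]
  have hBlk : Blk d t ((List.ofFn fun s => A s (i s)).prod)
      = op t t (fun _ => (List.ofFn fun s => A s (i s)).prod) := rfl
  rw [hBlk]
  refine op_t_congr _ _ ?_
  show (1 : Mat d) * prodChain L (0 + 0) = (List.ofFn fun s => A s (i s)).prod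
  rw [one_mul, Nat.add_zero, hL, prodChain_ofFn]
  congr 1
  refine congrArg List.ofFn (funext fun s => ?_)
  show extA t A (0 + (s : ℕ)) (i s) = A s (i s)
  rw [Nat.zero_add]
  exact dif_pos s.isLt

lemma multi_to_single {n : ℕ} (A : Fin t → Fin n → Mat d) (hA : ∀ s j, ‖A s j‖ ≤ 1)
    (T : (Fin t → Fin n) → ℝ) :
    ∃ (D : ℕ) (A' : Fin n → Mat D), (∀ j, ‖A' j‖ ≤ 1) ∧
      ‖∑ i : Fin t → Fin n, T i • (List.ofFn fun s => A s (i s)).prod‖ =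
      ‖∑ i : Fin t → Fin n, T i • (List.ofFn fun s => A' (i s)).prod‖ := by
  refine ⟨Module.finrank ℝ (K d t), fun j => cj d t (op t 1 (fun m => extA t A m j)), ?_, ?_⟩
  · intro j
    rw [norm_cj]
    refine op_norm_le_one _ _ fun m => ?_
    by_cases h : m < t
    · have he : extA t A m j = A ⟨m, h⟩ j := dif_pos h
      rw [he]; exact hA _ _
    · have he : extA t A m j = 0 := dif_neg h
      rw [he, norm_zero]; exact zero_le_one
  · have hval : ∀ i : Fin t → Fin n,
        (List.ofFn fun s => cj d t (op t 1 (fun m => extA t A m (i s)))).prod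
          = cj d t (Blk d t ((List.ofFn fun s => A s (i s)).prod)) := by
      intro i
      rw [← prod_ops_eq_blk A i, cj_prod, List.map_ofFn]
      rfl
    have h2 : ∑ i : Fin t → Fin n,
          T i • (List.ofFn fun s => cj d t (op t 1 (fun m => extA t A m (i s)))).prod
        = cj d t (Blk d t (∑ i : Fin t → Fin n,
            T i • (List.ofFn fun s => A s (i s)).prod)) := by
      conv_rhs => rw [map_sum, map_sum]
      refine Finset.sum_congr rfl fun i _ => ?_
      rw [map_smul, map_smul, hval i]
    show _ = ‖∑ i : Fin t → Fin n,
      T i • (List.ofFn fun s => cj d t (op t 1 (fun m => extA t A m (i s)))).prod‖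
    rw [h2, norm_cj, norm_Blk]

end CbAux

/-- The completely bounded norm of a `t`-tensor, defined as a supremum over `t`
contraction-valued maps `A_1, …, A_t`, equals the supremum over a single
contraction-valued map. -/
theorem cb_norm_single_map (n t : ℕ) (T : (Fin t → Fin n) → ℝ) :
    sSup {c : ℝ | ∃ (d : ℕ) (A : Fin t → Fin n → Mat d),
      (∀ s j, ‖A s j‖ ≤ 1) ∧
      c = ‖∑ i : Fin t → Fin n, T i • (List.ofFn fun s => A s (i s)).prod‖} =
    sSup {c : ℝ | ∃ (d : ℕ) (A : Fin n → Mat d),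
      (∀ j, ‖A j‖ ≤ 1) ∧
      c = ‖∑ i : Fin t → Fin n, T i • (List.ofFn fun s => A (i s)).prod‖} := by
  congr 1
  ext c
  simp only [Set.mem_setOf_eq]
  constructor
  · rintro ⟨d, A, hA, rfl⟩
    obtain ⟨D, A', hA', heq⟩ := CbAux.multi_to_single A hA T
    exact ⟨D, A', hA', heq⟩
  · rintro ⟨d, A, hA, rfl⟩
    exact ⟨d, fun _ => A, fun _ j => hA j, rfl⟩
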